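/- Let Λ, Y ∈ S^m be real symmetric m×m matrices such that Y∘Λ = 0 and Y ∈ Φ(Λ), i.e., ⟨W∘W, Λ⟩ > 0 for every nonzero W ∈ S^m with Y∘W = 0. Then rank Λ = m − rank Y. -/

import Mathlib

open Matrix

noncomputable section

def jmul {m : ℕ} (A B : Matrix (Fin m) (Fin m) ℝ) : Matrix (Fin m) (Fin m) ℝ :=
  (1 / 2 : ℝ) • (A * B + B * A)

def minner {m : ℕ} (A B : Matrix (Fin m) (Fin m) ℝ) : ℝ :=
  (A * B).trace

def memPhi {m : ℕ} (Λ Y : Matrix (Fin m) (Fin m) ℝ) : Prop :=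
  ∀ W : Matrix (Fin m) (Fin m) ℝ, W.IsSymm → W ≠ 0 → jmul Y W = 0 →
    0 < minner (jmul W W) Λ

def pderivG {n m : ℕ} (G : (Fin n → ℝ) → Matrix (Fin m) (Fin m) ℝ)
    (x : Fin n → ℝ) (k : Fin n) : Matrix (Fin m) (Fin m) ℝ :=
  Matrix.of fun i j => fderiv ℝ (fun y => G y i j) x (Pi.single k 1)

def dirDerivG {n m : ℕ} (G : (Fin n → ℝ) → Matrix (Fin m) (Fin m) ℝ)
    (x v : Fin n → ℝ) : Matrix (Fin m) (Fin m) ℝ :=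
  ∑ k, v k • pderivG G x k

def adjDG {n m : ℕ} (G : (Fin n → ℝ) → Matrix (Fin m) (Fin m) ℝ)
    (x : Fin n → ℝ) (W : Matrix (Fin m) (Fin m) ℝ) : Fin n → ℝ :=
  fun k => minner (pderivG G x k) W

def gradf {n : ℕ} (f : (Fin n → ℝ) → ℝ) (x : Fin n → ℝ) : Fin n → ℝ :=
  fun k => fderiv ℝ f x (Pi.single k 1)

def KKT1 {n m : ℕ} (f : (Fin n → ℝ) → ℝ) (G : (Fin n → ℝ) → Matrix (Fin m) (Fin m) ℝ)
    (x : Fin n → ℝ) (Λ : Matrix (Fin m) (Fin m) ℝ) : Prop :=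
  gradf f x = adjDG G x Λ ∧ Λ.PosSemidef ∧ (G x).PosSemidef ∧ jmul Λ (G x) = 0

def KKT2 {n m : ℕ} (f : (Fin n → ℝ) → ℝ) (G : (Fin n → ℝ) → Matrix (Fin m) (Fin m) ℝ)
    (x : Fin n → ℝ) (Y Λ : Matrix (Fin m) (Fin m) ℝ) : Prop :=
  gradf f x = adjDG G x Λ ∧ jmul Λ Y = 0 ∧ G x = jmul Y Y

def hessQ {n m : ℕ} (f : (Fin n → ℝ) → ℝ) (G : (Fin n → ℝ) → Matrix (Fin m) (Fin m) ℝ)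
    (Λ : Matrix (Fin m) (Fin m) ℝ) (x v : Fin n → ℝ) : ℝ :=
  iteratedFDeriv ℝ 2 (fun y => f y - minner (G y) Λ) x ![v, v]

def SOSCNLP {n m : ℕ} (f : (Fin n → ℝ) → ℝ) (G : (Fin n → ℝ) → Matrix (Fin m) (Fin m) ℝ)
    (x : Fin n → ℝ) (Y Λ : Matrix (Fin m) (Fin m) ℝ) : Prop :=
  ∀ (v : Fin n → ℝ) (W : Matrix (Fin m) (Fin m) ℝ), W.IsSymm →
    ¬(v = 0 ∧ W = 0) → dirDerivG G x v = (2 : ℝ) • jmul Y W →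
    0 < hessQ f G Λ x v + 2 * minner (jmul W W) Λ

def SONCNLP {n m : ℕ} (f : (Fin n → ℝ) → ℝ) (G : (Fin n → ℝ) → Matrix (Fin m) (Fin m) ℝ)
    (x : Fin n → ℝ) (Y Λ : Matrix (Fin m) (Fin m) ℝ) : Prop :=
  ∀ (v : Fin n → ℝ) (W : Matrix (Fin m) (Fin m) ℝ), W.IsSymm →
    dirDerivG G x v = (2 : ℝ) • jmul Y W →
    0 ≤ hessQ f G Λ x v + 2 * minner (jmul W W) Λ

def LICQ {n m : ℕ} (G : (Fin n → ℝ) → Matrix (Fin m) (Fin m) ℝ)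
    (x : Fin n → ℝ) (Y : Matrix (Fin m) (Fin m) ℝ) : Prop :=
  ∀ W : Matrix (Fin m) (Fin m) ℝ, W.IsSymm → jmul Y W = 0 → adjDG G x W = 0 → W = 0

def Nondeg {n m : ℕ} (G : (Fin n → ℝ) → Matrix (Fin m) (Fin m) ℝ)
    (x : Fin n → ℝ) : Prop :=
  ∀ W : Matrix (Fin m) (Fin m) ℝ, W.IsSymm → G x * W = 0 → adjDG G x W = 0 → W = 0

def CritCone {n m : ℕ} (f : (Fin n → ℝ) → ℝ) (G : (Fin n → ℝ) → Matrix (Fin m) (Fin m) ℝ)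
    (x : Fin n → ℝ) : Set (Fin n → ℝ) :=
  {d | (∀ u : Fin m → ℝ, G x *ᵥ u = 0 → 0 ≤ u ⬝ᵥ (dirDerivG G x d *ᵥ u)) ∧
    gradf f x ⬝ᵥ d = 0}

def IsMPInv {m : ℕ} (A P : Matrix (Fin m) (Fin m) ℝ) : Prop :=
  A * P * A = A ∧ P * A * P = P ∧ (A * P)ᵀ = A * P ∧ (P * A)ᵀ = P * A

def Hmat {n m : ℕ} (G : (Fin n → ℝ) → Matrix (Fin m) (Fin m) ℝ)
    (x : Fin n → ℝ) (Λ P : Matrix (Fin m) (Fin m) ℝ) : Matrix (Fin n) (Fin n) ℝ :=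
  Matrix.of fun i j => 2 * (pderivG G x i * P * pderivG G x j * Λ).trace

namespace Stmt1Aux

lemma jmul_self {m : ℕ} (W : Matrix (Fin m) (Fin m) ℝ) : jmul W W = W * W := by
  unfold jmul
  rw [show W * W + W * W = (2:ℝ) • (W * W) by rw [two_smul], smul_smul]
  norm_num

lemma jmul_eq_zero_iff {m : ℕ} (A B : Matrix (Fin m) (Fin m) ℝ) :
    jmul A B = 0 ↔ A * B + B * A = 0 := by
  unfold jmul
  rw [smul_eq_zero]
  norm_num

lemma trace_stdBasis_mul {m : ℕ} (i j : Fin m) (M : Matrix (Fin m) (Fin m) ℝ) :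
    (Matrix.single i j (1:ℝ) * M).trace = M j i := by
  simp [Matrix.trace, Matrix.diag, Matrix.mul_apply, Matrix.single, ite_and,
    Finset.sum_ite_eq, Finset.sum_ite_eq']

/-- Transfer of the Φ condition to the eigenbasis. -/
lemma phi_transfer {m : ℕ} (Λ Y U D : Matrix (Fin m) (Fin m) ℝ)
    (hU1 : star U * U = 1) (hU2 : U * star U = 1)
    (hPhi : memPhi Λ Y) (hYU : Y = U * D * star U)
    (W' : Matrix (Fin m) (Fin m) ℝ) (hW's : W'.IsSymm) (hW'ne : W' ≠ 0)
    (hc : D * W' + W' * D = 0) :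
    0 < (W' * W' * (star U * Λ * U)).trace := by
  have hstar : star U = Uᵀ := by
    rw [Matrix.star_eq_conjTranspose, Matrix.conjTranspose_eq_transpose_of_trivial]
  set W : Matrix (Fin m) (Fin m) ℝ := U * W' * star U with hW
  have hsym : W.IsSymm := by
    rw [Matrix.IsSymm, hW, hstar, Matrix.transpose_mul, Matrix.transpose_mul,
      Matrix.transpose_transpose, hW's.eq, mul_assoc]
  have hne : W ≠ 0 := by
    intro h
    apply hW'ne
    have : star U * W * U = W' := by
      rw [hW, show star U * (U * W' * star U) * U = (star U * U) * W' * (star U * U) by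
        noncomm_ring, hU1, one_mul, mul_one]
    rw [h, mul_zero, zero_mul] at this
    exact this.symm
  have hjm : jmul Y W = 0 := by
    rw [jmul_eq_zero_iff]
    have h1 : Y * W = U * (D * W') * star U := by
      rw [hYU, hW]
      rw [show U * D * star U * (U * W' * star U) = U * D * (star U * U) * W' * star U by
        noncomm_ring]
      rw [hU1]; noncomm_ring
    have h2 : W * Y = U * (W' * D) * star U := by
      rw [hYU, hW]
      rw [show U * W' * star U * (U * D * star U) = U * W' * (star U * U) * D * star U by
        noncomm_ring]
      rw [hU1]; noncomm_ring
    rw [h1, h2, show U * (D * W') * star U + U * (W' * D) * star U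
      = U * (D * W' + W' * D) * star U by noncomm_ring, hc, mul_zero, zero_mul]
  have := hPhi W hsym hne hjm
  rw [minner, jmul_self] at this
  have hWW : W * W = U * (W' * W') * star U := by
    rw [hW, show U * W' * star U * (U * W' * star U) = U * W' * (star U * U) * W' * star U by
      noncomm_ring]
    rw [hU1]; noncomm_ring
  rw [hWW] at this
  calc (0:ℝ) < (U * (W' * W') * star U * Λ).trace := this
    _ = (W' * W' * (star U * Λ * U)).trace := by
        rw [show U * (W' * W') * star U * Λ = U * (W' * W' * (star U * Λ)) by noncomm_ring,
          Matrix.trace_mul_comm]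
        noncomm_ring

end Stmt1Aux

namespace Stmt1Aux

lemma trace_vecMulVec_mul {m : ℕ} (u v : Fin m → ℝ) (M : Matrix (Fin m) (Fin m) ℝ) :
    (vecMulVec u v * M).trace = v ⬝ᵥ (M *ᵥ u) := by
  simp only [Matrix.trace, Matrix.diag, Matrix.mul_apply, vecMulVec_apply, dotProduct,
    Matrix.mulVec, Finset.mul_sum]
  rw [Finset.sum_comm]
  apply Finset.sum_congr rfl
  intro j _
  apply Finset.sum_congr rfl
  intro i _
  ring

lemma vecMulVec_mul_vecMulVec {m : ℕ} (u v w x : Fin m → ℝ) :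
    vecMulVec u v * vecMulVec w x = (v ⬝ᵥ w) • vecMulVec u x := by
  ext i j
  simp only [Matrix.mul_apply, vecMulVec_apply, Matrix.smul_apply, dotProduct, smul_eq_mul,
    Finset.sum_mul, Finset.mul_sum]
  apply Finset.sum_congr rfl
  intro k _
  ring

end Stmt1Aux

lemma Stmt1Aux.stdBasis_transpose {m : ℕ} (i j : Fin m) (c : ℝ) :
    (Matrix.single i j c)ᵀ = Matrix.single j i c := by
  ext a b
  simp only [Matrix.transpose_apply, Matrix.single, Matrix.of_apply]
  split_ifs with h1 h2 <;> first | rfl | tauto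

theorem stmt1 {m : ℕ} (Λ Y : Matrix (Fin m) (Fin m) ℝ)
    (hΛ : Λ.IsSymm) (hY : Y.IsSymm)
    (hYΛ : jmul Y Λ = 0) (hPhi : memPhi Λ Y) :
    Λ.rank = m - Y.rank := by
  classical
  have hYh : Y.IsHermitian := by
    rwa [Matrix.IsHermitian, Matrix.conjTranspose_eq_transpose_of_trivial]
  set U : Matrix (Fin m) (Fin m) ℝ := (hYh.eigenvectorUnitary : Matrix (Fin m) (Fin m) ℝ)
    with hUdef
  set d : Fin m → ℝ := hYh.eigenvalues with hddef
  have hU1 : star U * U = 1 := Matrix.mem_unitaryGroup_iff'.mp hYh.eigenvectorUnitary.2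
  have hU2 : U * star U = 1 := Matrix.mem_unitaryGroup_iff.mp hYh.eigenvectorUnitary.2
  have hspec : Y = U * Matrix.diagonal d * star U := by
    have h := hYh.spectral_theorem
    simpa using h
  set Λ' : Matrix (Fin m) (Fin m) ℝ := star U * Λ * U with hΛ'def
  have hD : star U * Y * U = Matrix.diagonal d := by
    rw [hspec, show star U * (U * Matrix.diagonal d * star U) * U
      = (star U * U) * Matrix.diagonal d * (star U * U) by noncomm_ring, hU1, one_mul, mul_one]
  have hanti : Matrix.diagonal d * Λ' + Λ' * Matrix.diagonal d = 0 := by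
    have h0 : Y * Λ + Λ * Y = 0 := (Stmt1Aux.jmul_eq_zero_iff Y Λ).mp hYΛ
    have e1 : Matrix.diagonal d * Λ' = star U * (Y * Λ) * U := by
      rw [← hD, hΛ'def, show star U * Y * U * (star U * Λ * U)
        = star U * Y * (U * star U) * (Λ * U) by noncomm_ring, hU2]
      noncomm_ring
    have e2 : Λ' * Matrix.diagonal d = star U * (Λ * Y) * U := by
      rw [← hD, hΛ'def, show star U * Λ * U * (star U * Y * U)
        = star U * Λ * (U * star U) * (Y * U) by noncomm_ring, hU2]
      noncomm_ring
    rw [e1, e2, show star U * (Y * Λ) * U + star U * (Λ * Y) * U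
      = star U * (Y * Λ + Λ * Y) * U by noncomm_ring, h0, mul_zero, zero_mul]
  have hentry : ∀ i j, (d i + d j) * Λ' i j = 0 := by
    intro i j
    have h := congrFun (congrFun hanti i) j
    simp only [Matrix.add_apply, Matrix.diagonal_mul, Matrix.mul_diagonal,
      Matrix.zero_apply] at h
    linear_combination h
  have hzero : ∀ i j, d i + d j = 0 → d i = 0 := by
    intro i j hij
    by_contra hdi
    have hji : i ≠ j := by rintro rfl; exact hdi (by linarith)
    have hdj : d j ≠ 0 := fun h => hdi (by linarith)
    have hΛii : Λ' i i = 0 := by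
      rcases mul_eq_zero.mp (hentry i i) with h | h
      · exact absurd (by linarith : d i = 0) hdi
      · exact h
    have hΛjj : Λ' j j = 0 := by
      rcases mul_eq_zero.mp (hentry j j) with h | h
      · exact absurd (by linarith : d j = 0) hdj
      · exact h
    set W' : Matrix (Fin m) (Fin m) ℝ :=
      Matrix.single i j (1:ℝ) + Matrix.single j i (1:ℝ) with hW'def
    have hW'supp : ∀ a b, W' a b ≠ 0 → d a + d b = 0 := by
      intro a b hab
      rw [hW'def] at hab
      by_cases h1 : i = a ∧ j = b
      · rw [← h1.1, ← h1.2]; exact hij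
      · by_cases h2 : j = a ∧ i = b
        · rw [← h2.1, ← h2.2]; linarith
        · exfalso; apply hab
          simp [Matrix.add_apply, Matrix.single, h1, h2]
    have hsym : W'.IsSymm := by
      rw [Matrix.IsSymm, hW'def, Matrix.transpose_add, Stmt1Aux.stdBasis_transpose,
        Stmt1Aux.stdBasis_transpose, add_comm]
    have hne : W' ≠ 0 := by
      intro h
      have := congrFun (congrFun h i) j
      rw [hW'def] at this
      simp [Matrix.add_apply, Matrix.single, hji, (Ne.symm hji)] at this
    have hcomm : Matrix.diagonal d * W' + W' * Matrix.diagonal d = 0 := by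
      ext a b
      simp only [Matrix.add_apply, Matrix.diagonal_mul, Matrix.mul_diagonal, Matrix.zero_apply]
      by_cases hab : W' a b = 0
      · rw [hab]; ring
      · have h := hW'supp a b hab; linear_combination W' a b * h
    have hpos := Stmt1Aux.phi_transfer Λ Y U (Matrix.diagonal d) hU1 hU2 hPhi hspec
      W' hsym hne hcomm
    have hWW : W' * W' = Matrix.single i i (1:ℝ) + Matrix.single j j (1:ℝ) := by
      have hji' : j ≠ i := Ne.symm hji
      rw [hW'def]
      simp [add_mul, mul_add, hji, hji']
      exact add_comm _ _
    rw [hWW, add_mul, Matrix.trace_add, Stmt1Aux.trace_stdBasis_mul,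
      Stmt1Aux.trace_stdBasis_mul] at hpos
    rw [← hΛ'def] at hpos
    rw [hΛii, hΛjj] at hpos
    exact lt_irrefl 0 (by simpa using hpos)
  have hsupp : ∀ i j, d j ≠ 0 → Λ' i j = 0 := by
    intro i j h
    by_cases hs : d i + d j = 0
    · exact absurd (hzero j i (by linarith)) h
    · rcases mul_eq_zero.mp (hentry i j) with h' | h'
      · exact absurd h' hs
      · exact h'
  have hPD : ∀ u : Fin m → ℝ, (∀ i, d i ≠ 0 → u i = 0) → u ≠ 0 →
      0 < u ⬝ᵥ (Λ' *ᵥ u) := by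
    intro u hu hune
    set W' : Matrix (Fin m) (Fin m) ℝ := vecMulVec u u with hW'def
    have hsym : W'.IsSymm := by
      rw [Matrix.IsSymm]; ext a b
      simp only [Matrix.transpose_apply, hW'def, Matrix.vecMulVec_apply]; ring
    have hne : W' ≠ 0 := by
      intro h
      obtain ⟨i, hi⟩ := Function.ne_iff.mp hune
      apply hi
      have := congrFun (congrFun h i) i
      rw [hW'def] at this
      simp only [Matrix.vecMulVec_apply, Matrix.zero_apply] at this
      exact mul_self_eq_zero.mp this
    have hcomm : Matrix.diagonal d * W' + W' * Matrix.diagonal d = 0 := by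
      ext a b
      simp only [Matrix.add_apply, Matrix.diagonal_mul, Matrix.mul_diagonal, Matrix.zero_apply,
        hW'def, Matrix.vecMulVec_apply]
      by_cases ha : u a = 0
      · rw [ha]; ring
      · by_cases hb : u b = 0
        · rw [hb]; ring
        · have hda : d a = 0 := by by_contra hh; exact ha (hu a hh)
          have hdb : d b = 0 := by by_contra hh; exact hb (hu b hh)
          rw [hda, hdb]; ring
    have hpos := Stmt1Aux.phi_transfer Λ Y U (Matrix.diagonal d) hU1 hU2 hPhi hspec
      W' hsym hne hcomm
    rw [hW'def, Stmt1Aux.vecMulVec_mul_vecMulVec, smul_mul_assoc, Matrix.trace_smul,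
      Stmt1Aux.trace_vecMulVec_mul, ← hΛ'def] at hpos
    have huu : (0:ℝ) ≤ u ⬝ᵥ u := Finset.sum_nonneg fun i _ => mul_self_nonneg (u i)
    by_contra hle
    push_neg at hle
    have : (u ⬝ᵥ u) • (u ⬝ᵥ (Λ' *ᵥ u)) ≤ 0 := by
      rw [smul_eq_mul]; exact mul_nonpos_of_nonneg_of_nonpos huu hle
    linarith
  have hkerΛ' : ∀ v, Λ' *ᵥ v = 0 ↔ ∀ i, d i = 0 → v i = 0 := by
    intro v
    constructor
    · intro hv
      set u : Fin m → ℝ := fun i => if d i = 0 then v i else 0 with hu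
      have husup : ∀ i, d i ≠ 0 → u i = 0 := by intro i h; simp [hu, h]
      have huv : Λ' *ᵥ u = Λ' *ᵥ v := by
        funext i
        simp only [Matrix.mulVec, dotProduct]
        apply Finset.sum_congr rfl
        intro j _
        by_cases hdj : d j = 0
        · simp [hu, hdj]
        · simp [hsupp i j hdj]
      by_cases hu0 : u = 0
      · intro i hdi
        have := congrFun hu0 i
        simpa [hu, hdi] using this
      · exfalso
        have hposu := hPD u husup hu0
        rw [huv, hv] at hposu
        simp [dotProduct] at hposu
    · intro hv
      funext i
      simp only [Matrix.mulVec, dotProduct, Pi.zero_apply]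
      apply Finset.sum_eq_zero
      intro j _
      by_cases hdj : d j = 0
      · rw [hv j hdj, mul_zero]
      · rw [hsupp i j hdj, zero_mul]
  set z : Fin m → ℝ := fun i => if d i = 0 then 1 else 0 with hz
  have hkerz : ∀ v, Matrix.diagonal z *ᵥ v = 0 ↔ ∀ i, d i = 0 → v i = 0 := by
    intro v
    constructor
    · intro hv i hdi
      have := congrFun hv i
      rw [Matrix.mulVec_diagonal] at this
      simpa [hz, hdi] using this
    · intro hv
      funext i
      rw [Matrix.mulVec_diagonal]
      by_cases hdi : d i = 0
      · simp [hz, hdi, hv i hdi]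
      · simp [hz, hdi]
  have hkereq : LinearMap.ker Λ'.mulVecLin = LinearMap.ker (Matrix.diagonal z).mulVecLin := by
    ext v
    simp only [LinearMap.mem_ker, Matrix.mulVecLin_apply]
    rw [hkerΛ' v, hkerz v]
  have hfr : Module.finrank ℝ (Fin m → ℝ) = m := by
    rw [Module.finrank_fintype_fun_eq_card, Fintype.card_fin]
  have h1 := LinearMap.finrank_range_add_finrank_ker (Λ'.mulVecLin)
  have h2 := LinearMap.finrank_range_add_finrank_ker ((Matrix.diagonal z).mulVecLin)
  rw [hfr] at h1 h2
  have hrankeq : Λ'.rank = (Matrix.diagonal z).rank := by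
    show Module.finrank ℝ (LinearMap.range Λ'.mulVecLin)
      = Module.finrank ℝ (LinearMap.range (Matrix.diagonal z).mulVecLin)
    rw [hkereq] at h1
    omega
  have hrz : (Matrix.diagonal z).rank = Fintype.card {i // d i = 0} := by
    rw [Matrix.rank_diagonal]
    apply Fintype.card_congr
    apply Equiv.subtypeEquivRight
    intro i
    by_cases hdi : d i = 0 <;> simp [hz, hdi]
  have hdetU : IsUnit U.det := by
    apply IsUnit.of_mul_eq_one (star U).det
    rw [← Matrix.det_mul, hU2, Matrix.det_one]
  have hdetU' : IsUnit (star U).det := by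
    apply IsUnit.of_mul_eq_one U.det
    rw [← Matrix.det_mul, hU1, Matrix.det_one]
  have hrankΛ : Λ.rank = Λ'.rank := by
    rw [hΛ'def, show star U * Λ * U = star U * Λ * U from rfl,
      Matrix.rank_mul_eq_left_of_isUnit_det U (star U * Λ) hdetU,
      Matrix.rank_mul_eq_right_of_isUnit_det (star U) Λ hdetU']
  have hrankY : Y.rank = Fintype.card {i // d i ≠ 0} := hYh.rank_eq_card_non_zero_eigs
  have hcards : Fintype.card {i // d i = 0} = m - Fintype.card {i // d i ≠ 0} := by
    have := Fintype.card_subtype_compl (fun i : Fin m => d i ≠ 0)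
    rw [Fintype.card_fin] at this
    rw [← this]
    apply Fintype.card_congr
    apply Equiv.subtypeEquivRight
    intro i
    simp
  rw [hrankΛ, hrankeq, hrz, hcards, hrankY]
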